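/- Suppose φ satisfies Assumption (A) with s > d, and fix z > 0 and β > 0. Then lim_{a→0} ε₁(a) = 0 and, moreover, lim_{a→0} a^{−d} · log(1 + ε₁(a)) = 0, where ε₁(a) := (1/2)·z²·a^{2d}·e^{−β(b(a)−5v₀(a))}·exp(z·a^d·e^{−β(b(a)−3v₀(a))}). -/

import Mathlib

open MeasureTheory Filter Topology Set
open scoped BigOperators ENNReal NNReal

noncomputable section

attribute [local instance] Classical.propDecidable

/-- Points of `ℝ^d` (Euclidean space). -/
abbrev Pt (d : ℕ) : Type := EuclideanSpace ℝ (Fin d)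

/-- The index `r ∈ ℤ^d` of the cube `Δ_a(r)` of the partition `Δ̄_a` containing `x`:
for `a > 0` we have `cubeIdx d a x = r ↔ ∀ i, a*(r i - 1/2) ≤ x i ∧ x i < a*(r i + 1/2)`. -/
def cubeIdx (d : ℕ) (a : ℝ) (x : Pt d) : Fin d → ℤ := fun i => ⌊x i / a + 1/2⌋

/-- `φ⁺(t) = max {0, φ(t)}`. -/
def phiPlus (φ : ℝ → ℝ) (t : ℝ) : ℝ := max (φ t) 0

/-- `φ⁻(t) = -min {0, φ(t)}`. -/
def phiMinus (φ : ℝ → ℝ) (t : ℝ) : ℝ := max (-(φ t)) 0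

/-- Energy `U(γ) = Σ_{{x,y}⊂γ} φ(|x-y|)` of a finite configuration. -/
def energy (d : ℕ) (φ : ℝ → ℝ) (γ : Finset (Pt d)) : ℝ :=
  (∑ p ∈ γ.offDiag, φ (dist p.1 p.2)) / 2

/-- Interaction energy `W(η;γ) = Σ_{x∈η} Σ_{y∈γ} φ(|x-y|)`. -/
def interW (d : ℕ) (φ : ℝ → ℝ) (η γ : Finset (Pt d)) : ℝ :=
  ∑ x ∈ η, ∑ y ∈ γ, φ (dist x y)

/-- Number of points of `γ` in the cube `Δ_a(r)`, i.e. `|γ_Δ|`. -/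
def cubeCount (d : ℕ) (a : ℝ) (γ : Finset (Pt d)) (r : Fin d → ℤ) : ℕ :=
  (γ.filter fun x => cubeIdx d a x = r).card

/-- `Σ_{Δ ∈ Δ̄_a : |γ_Δ| ≥ 2} |γ_Δ|²`. -/
def densSum (d : ℕ) (a : ℝ) (γ : Finset (Pt d)) : ℝ :=
  ∑ r ∈ γ.image (cubeIdx d a),
    if 2 ≤ cubeCount d a γ r then (cubeCount d a γ r : ℝ) ^ 2 else 0

/-- `b(a) = inf {φ⁺(|x-y|) : x ≠ y lie in one common cube of Δ̄_a}`. -/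
def bVal (d : ℕ) (φ : ℝ → ℝ) (a : ℝ) : ℝ :=
  sInf {t : ℝ | ∃ x y : Pt d, x ≠ y ∧ cubeIdx d a x = cubeIdx d a y ∧ t = phiPlus φ (dist x y)}

/-- `v₀(a) = Σ_{Δ'∈Δ̄_a} sup_{x∈Δ₀} sup_{y∈Δ'} φ⁻(|x-y|)` (valued in `ℝ≥0∞`). -/
def v0E (d : ℕ) (φ : ℝ → ℝ) (a : ℝ) : ℝ≥0∞ :=
  ∑' r : Fin d → ℤ,
    ⨆ x ∈ {x : Pt d | cubeIdx d a x = 0}, ⨆ y ∈ {y : Pt d | cubeIdx d a y = r},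
      ENNReal.ofReal (phiMinus φ (dist x y))

/-- Real value of `v₀(a)`. -/
def v0Val (d : ℕ) (φ : ℝ → ℝ) (a : ℝ) : ℝ := (v0E d φ a).toReal

/-- Assumption (A) on the interaction potential. -/
structure AssumptionA (d : ℕ) (φ : ℝ → ℝ) (r₀ R φ₀ φ₁ ε₀ s : ℝ) : Prop where
  cont : ContinuousOn φ (Set.Ioi (0 : ℝ))
  r0_pos : 0 < r₀
  R_gt : r₀ < R
  phi0_pos : 0 < φ₀
  phi1_pos : 0 < φ₁
  eps0_pos : 0 < ε₀
  s_ge : (d : ℝ) ≤ s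
  decay : ∀ t : ℝ, R ≤ t → -(φ₁ / t ^ ((d : ℝ) + ε₀)) ≤ φ t
  core : ∀ t : ℝ, 0 < t → t ≤ r₀ → φ₀ / t ^ s ≤ φ t

/-- `χ₋^a(γ) = 1` iff no cube of `Δ̄_a` contains two or more points of `γ`. -/
def chiM (d : ℕ) (a : ℝ) (γ : Finset (Pt d)) : ℝ :=
  if ∀ x ∈ γ, ∀ y ∈ γ, cubeIdx d a x = cubeIdx d a y → x = y then 1 else 0

/-- The finite configuration `{y₁,…,y_n}`. -/
def confOf {d n : ℕ} (y : Fin n → Pt d) : Finset (Pt d) := Finset.image y Finset.univ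

/-- Weighted grand partition function `1 + Σ_{n≥1} (zⁿ/n!) ∫_{Λⁿ} e^{-βU({x₁,…,xₙ})} w({x₁,…,xₙ})`. -/
def ZW (d : ℕ) (φ : ℝ → ℝ) (z β : ℝ) (Λ : Set (Pt d)) (w : Finset (Pt d) → ℝ) : ℝ :=
  1 + ∑' n : ℕ, (z ^ (n + 1) / (n + 1).factorial) *
    ∫ y in {y : Fin (n + 1) → Pt d | ∀ i, y i ∈ Λ},
      Real.exp (-β * energy d φ (confOf y)) * w (confOf y)

/-- Grand partition function `Z_Λ(z,β)`. -/
def ZΛ (d : ℕ) (φ : ℝ → ℝ) (z β : ℝ) (Λ : Set (Pt d)) : ℝ := ZW d φ z β Λ fun _ => 1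

/-- Dilute (quasi-lattice approximated) partition function `Z_Λ^{(-)}(z,β,a)`. -/
def ZΛm (d : ℕ) (φ : ℝ → ℝ) (z β a : ℝ) (Λ : Set (Pt d)) : ℝ := ZW d φ z β Λ (chiM d a)

/-- `Σ_{n≥0} (zⁿ/n!) ∫_{Λⁿ} e^{-βU(η∪{y₁,…,y_n})} w(η∪{y₁,…,y_n})`. -/
def corrInt (d : ℕ) (φ : ℝ → ℝ) (z β : ℝ) (Λ : Set (Pt d)) (η : Finset (Pt d))
    (w : Finset (Pt d) → ℝ) : ℝ :=
  Real.exp (-β * energy d φ η) * w η +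
  ∑' n : ℕ, (z ^ (n + 1) / (n + 1).factorial) *
    ∫ y in {y : Fin (n + 1) → Pt d | ∀ i, y i ∈ Λ},
      Real.exp (-β * energy d φ (η ∪ confOf y)) * w (η ∪ confOf y)

/-- Finite-volume correlation function `ρ_Λ(η;z,β)`. -/
def rhoΛ (d : ℕ) (φ : ℝ → ℝ) (z β : ℝ) (Λ : Set (Pt d)) (η : Finset (Pt d)) : ℝ :=
  z ^ η.card / ZΛ d φ z β Λ * corrInt d φ z β Λ η fun _ => 1

/-- Approximated correlation function `ρ_Λ^{(-)}(η;z,β,a)`. -/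
def rhoΛm (d : ℕ) (φ : ℝ → ℝ) (z β a : ℝ) (Λ : Set (Pt d)) (η : Finset (Pt d)) : ℝ :=
  z ^ η.card / ZΛm d φ z β a Λ * corrInt d φ z β Λ η (chiM d a)

/-- `ε₁(a)`. -/
def eps1 (d : ℕ) (φ : ℝ → ℝ) (z β a : ℝ) : ℝ :=
  1/2 * z^2 * a^(2*d) * Real.exp (-β * (bVal d φ a - 5 * v0Val d φ a)) *
    Real.exp (z * a^d * Real.exp (-β * (bVal d φ a - 3 * v0Val d φ a)))

/-- The cube `[-L/2, L/2)^d`. -/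
def boxHalf (d : ℕ) (L : ℝ) : Set (Pt d) := {x | ∀ i, -(L/2) ≤ x i ∧ x i < L/2}

/-- The cube `Λ_l = [-a(l+1/2), a(l+1/2))^d`, a union of cubes of `Δ̄_a`. -/
def boxLat (d : ℕ) (a : ℝ) (l : ℕ) : Set (Pt d) :=
  {x | ∀ i, -(a*(l+1/2)) ≤ x i ∧ x i < a*(l+1/2)}


section Eps1Aux

open Real

variable {d : ℕ}

lemma cubeIdx_coord_bounds {a : ℝ} (ha : 0 < a) {x : Pt d} {r : Fin d → ℤ}
    (h : cubeIdx d a x = r) (i : Fin d) :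
    a * r i - a / 2 ≤ x i ∧ x i < a * r i + a / 2 := by
  have h1 : ⌊x i / a + 1 / 2⌋ = r i := congrFun h i
  rw [Int.floor_eq_iff] at h1
  have hxa : x i / a * a = x i := div_mul_cancel₀ _ ha.ne'
  constructor
  · nlinarith [mul_le_mul_of_nonneg_right h1.1 ha.le]
  · nlinarith [mul_lt_mul_of_pos_right h1.2 ha]

lemma abs_coord_lt_of_same {a : ℝ} (ha : 0 < a) {x y : Pt d}
    (h : cubeIdx d a x = cubeIdx d a y) (i : Fin d) : |x i - y i| < a := by
  have h1 : ⌊x i / a + 1 / 2⌋ = ⌊y i / a + 1 / 2⌋ := congrFun h i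
  have h2 := Int.abs_sub_lt_one_of_floor_eq_floor h1
  have h3 : x i / a + 1 / 2 - (y i / a + 1 / 2) = (x i - y i) / a := by ring
  rw [h3, abs_div, abs_of_pos ha, div_lt_one ha] at h2
  exact h2

lemma coord_le_dist (x y : Pt d) (i : Fin d) : |x i - y i| ≤ dist x y := by
  rw [EuclideanSpace.dist_eq]
  have h1 : |x i - y i| = Real.sqrt (dist (x i) (y i) ^ 2) := by
    rw [Real.sqrt_sq dist_nonneg, Real.dist_eq]
  rw [h1]
  apply Real.sqrt_le_sqrt
  exact Finset.single_le_sum (f := fun j => dist (x j) (y j) ^ 2)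
    (fun j _ => sq_nonneg _) (Finset.mem_univ i)

lemma dist_le_sqrt_mul {x y : Pt d} {c : ℝ} (hc : 0 ≤ c)
    (h : ∀ i, |x i - y i| ≤ c) : dist x y ≤ Real.sqrt d * c := by
  rw [EuclideanSpace.dist_eq]
  have h1 : ∑ i, dist (x i) (y i) ^ 2 ≤ (d : ℝ) * c ^ 2 := by
    calc ∑ i, dist (x i) (y i) ^ 2 ≤ ∑ _i : Fin d, c ^ 2 := by
          apply Finset.sum_le_sum
          intro i _
          have := h i
          rw [Real.dist_eq]
          nlinarith [abs_nonneg (x i - y i)]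
      _ = (d : ℝ) * c ^ 2 := by simp [Finset.sum_const, nsmul_eq_mul]
  calc Real.sqrt (∑ i, dist (x i) (y i) ^ 2) ≤ Real.sqrt ((d : ℝ) * c ^ 2) :=
        Real.sqrt_le_sqrt h1
    _ = Real.sqrt d * c := by
        rw [Real.sqrt_mul (Nat.cast_nonneg d), Real.sqrt_sq hc]

lemma bVal_lower (hd : 1 ≤ d) {φ : ℝ → ℝ} {r₀ R φ₀ φ₁ ε₀ s : ℝ}
    (hA : AssumptionA d φ r₀ R φ₀ φ₁ ε₀ s) {a : ℝ} (ha : 0 < a)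
    (har : Real.sqrt d * a ≤ r₀) :
    φ₀ / (Real.sqrt d * a) ^ s ≤ bVal d φ a := by
  have hd0 : (0:ℝ) < Real.sqrt d := Real.sqrt_pos.2 (by exact_mod_cast hd)
  have hs0 : (0:ℝ) ≤ s := le_trans (Nat.cast_nonneg d) hA.s_ge
  -- nonemptiness witness
  have hne : {t : ℝ | ∃ x y : Pt d, x ≠ y ∧ cubeIdx d a x = cubeIdx d a y ∧
      t = phiPlus φ (dist x y)}.Nonempty := by
    set x0 : Pt d := WithLp.toLp 2 (fun _ => 0 : Fin d → ℝ)
    set y0 : Pt d := WithLp.toLp 2 (fun _ => a/4 : Fin d → ℝ)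
    refine ⟨phiPlus φ (dist x0 y0), x0, y0, ?_, ?_, rfl⟩
    · intro hxy
      have : (0:ℝ) = a/4 := congrArg (fun v : Pt d => v ⟨0, hd⟩) hxy
      linarith
    · funext i
      show ⌊(0:ℝ) / a + 1/2⌋ = ⌊a/4/a + 1/2⌋
      have h4 : a/4/a = 1/4 := by field_simp
      rw [zero_div, h4]
      norm_num
  refine le_csInf hne ?_
  rintro t ⟨x, y, hxy, hcube, rfl⟩
  have hdpos : 0 < dist x y := dist_pos.2 hxy
  have hdle : dist x y ≤ Real.sqrt d * a := by
    apply dist_le_sqrt_mul ha.le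
    exact fun i => (abs_coord_lt_of_same ha hcube i).le
  have hcore := hA.core (dist x y) hdpos (le_trans hdle har)
  have hpow : dist x y ^ s ≤ (Real.sqrt d * a) ^ s :=
    Real.rpow_le_rpow hdpos.le hdle hs0
  have hppos : (0:ℝ) < dist x y ^ s := Real.rpow_pos_of_pos hdpos s
  have h2 : φ₀ / (Real.sqrt d * a) ^ s ≤ φ₀ / dist x y ^ s := by
    gcongr
    exact hA.phi0_pos.le
  refine le_trans h2 (le_trans hcore ?_)
  exact le_max_left _ _


lemma rpow_anti_base {x y p : ℝ} (hx : 0 < x) (hxy : x ≤ y) (hp : 0 ≤ p) :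
    y ^ (-p) ≤ x ^ (-p) := by
  have hy : 0 < y := lt_of_lt_of_le hx hxy
  rw [Real.rpow_neg hy.le, Real.rpow_neg hx.le]
  exact inv_anti₀ (Real.rpow_pos_of_pos hx p) (Real.rpow_le_rpow hx.le hxy hp)

lemma phiMinus_nonneg (φ : ℝ → ℝ) (t : ℝ) : 0 ≤ phiMinus φ t := le_max_right _ _

lemma phiMinus_le_decay {φ : ℝ → ℝ} {r₀ R φ₀ φ₁ ε₀ s : ℝ}
    (hA : AssumptionA d φ r₀ R φ₀ φ₁ ε₀ s) {t : ℝ} (ht : R ≤ t) :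
    phiMinus φ t ≤ φ₁ / t ^ ((d : ℝ) + ε₀) := by
  have hR : 0 < R := lt_trans hA.r0_pos hA.R_gt
  have ht0 : 0 < t := lt_of_lt_of_le hR ht
  have h2 : 0 ≤ φ₁ / t ^ ((d:ℝ) + ε₀) := by
    have := Real.rpow_pos_of_pos ht0 ((d:ℝ) + ε₀)
    have := hA.phi1_pos
    positivity
  have h1 := hA.decay t ht
  exact max_le (by rw [div_eq_mul_inv] at *; linarith [neg_le_neg h1]) h2

lemma phiMinus_bdd {φ : ℝ → ℝ} {r₀ R φ₀ φ₁ ε₀ s : ℝ}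
    (hA : AssumptionA d φ r₀ R φ₀ φ₁ ε₀ s) :
    ∃ M : ℝ, 0 ≤ M ∧ ∀ t : ℝ, 0 ≤ t → phiMinus φ t ≤ M := by
  have hR : 0 < R := lt_trans hA.r0_pos hA.R_gt
  have hsub : Set.Icc r₀ R ⊆ Set.Ioi (0:ℝ) := fun t ht => lt_of_lt_of_le hA.r0_pos ht.1
  have hcont : ContinuousOn (phiMinus φ) (Set.Icc r₀ R) := fun t ht =>
    (((hA.cont.mono hsub) t ht).neg).max continuousWithinAt_const
  obtain ⟨t₁, ht₁, hmax'⟩ := isCompact_Icc.exists_isMaxOn ⟨r₀, le_refl r₀, hA.R_gt.le⟩ hcont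
  have hmax : ∀ t ∈ Set.Icc r₀ R, phiMinus φ t ≤ phiMinus φ t₁ := fun t ht => hmax' ht
  refine ⟨max (phiMinus φ 0) (max (phiMinus φ t₁) (φ₁ / R ^ ((d:ℝ) + ε₀))), ?_, ?_⟩
  · exact le_trans (phiMinus_nonneg φ 0) (le_max_left _ _)
  · intro t ht
    rcases eq_or_lt_of_le ht with h0 | h0
    · rw [← h0]; exact le_max_left _ _
    rcases le_or_gt t r₀ with h1 | h1
    · have hcore := hA.core t h0 h1
      have hpos : 0 < φ t :=
        lt_of_lt_of_le (div_pos hA.phi0_pos (Real.rpow_pos_of_pos h0 s)) hcore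
      have : phiMinus φ t ≤ 0 := max_le (by linarith) le_rfl
      exact le_trans this (le_trans (phiMinus_nonneg φ 0) (le_max_left _ _))
    rcases le_or_gt t R with h2 | h2
    · exact le_trans (hmax t ⟨h1.le, h2⟩) (le_trans (le_max_left _ _) (le_max_right _ _))
    · refine le_trans (phiMinus_le_decay hA h2.le) ?_
      refine le_trans ?_ (le_trans (le_max_right _ _) (le_max_right _ _))
      have h5 : R ^ ((d:ℝ)+ε₀) ≤ t ^ ((d:ℝ)+ε₀) :=
        Real.rpow_le_rpow hR.le h2.le (by have := hA.eps0_pos; positivity)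
      exact div_le_div_of_nonneg_left hA.phi1_pos.le (Real.rpow_pos_of_pos hR _) h5

lemma dist_ge_of_cubes {a : ℝ} (ha : 0 < a) {x y : Pt d} {r : Fin d → ℤ}
    (hx : cubeIdx d a x = 0) (hy : cubeIdx d a y = r) (i : Fin d) :
    a * (((r i).natAbs : ℝ) - 1) ≤ dist x y := by
  have hxb := cubeIdx_coord_bounds ha hx i
  have hyb := cubeIdx_coord_bounds ha hy i
  simp only [Pi.zero_apply, Int.cast_zero, mul_zero, zero_sub, zero_add] at hxb
  refine le_trans ?_ (coord_le_dist x y i)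
  have hna : (((r i).natAbs : ℝ)) = |((r i : ℝ))| := by
    simp [Nat.cast_natAbs]
  rw [hna]
  rcases le_or_gt 0 ((r i : ℝ)) with hri | hri
  · rw [abs_of_nonneg hri]
    have : a * ((r i : ℝ) - 1) ≤ y i - x i := by nlinarith
    refine le_trans ?_ (le_trans this ?_)
    · nlinarith
    · rw [abs_sub_comm]; exact le_abs_self _
  · rw [abs_of_neg hri]
    have : a * (-(r i : ℝ) - 1) ≤ x i - y i := by nlinarith
    refine le_trans (by nlinarith) (le_trans this (le_abs_self _))

lemma rpow_step {δ : ℝ} (hδ : 0 < δ) {k : ℝ} (hk : 1 ≤ k) :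
    δ * (k+1) ^ (-(1+δ)) ≤ k ^ (-δ) - (k+1) ^ (-δ) := by
  have hk0 : (0:ℝ) < k := lt_of_lt_of_le one_pos hk
  have hcont : ContinuousOn (fun t : ℝ => t ^ (-δ)) (Set.Icc k (k+1)) := by
    apply ContinuousOn.rpow_const continuousOn_id
    intro t ht
    exact Or.inl (ne_of_gt (lt_of_lt_of_le hk0 ht.1))
  have hder : ∀ t ∈ Set.Ioo k (k+1),
      HasDerivAt (fun t : ℝ => t ^ (-δ)) (-δ * t ^ (-δ-1)) t := by
    intro t ht
    exact Real.hasDerivAt_rpow_const (Or.inl (ne_of_gt (lt_trans hk0 ht.1)))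
  obtain ⟨c, hc, hslope⟩ := exists_hasDerivAt_eq_slope _ _ (by linarith : k < k + 1) hcont hder
  have h1 : (k+1) ^ (-δ) - k ^ (-δ) = -δ * c ^ (-δ-1) := by
    rw [hslope]; field_simp; ring
  have h2 : (k+1) ^ (-δ-1) ≤ c ^ (-δ-1) := by
    have h3 : (-δ-1) = -(δ+1) := by ring
    rw [h3]
    exact rpow_anti_base (lt_trans hk0 hc.1) hc.2.le (by linarith)
  have h4 : -(1+δ) = -δ-1 := by ring
  rw [h4]
  nlinarith [Real.rpow_pos_of_pos (lt_trans hk0 hc.1) (-δ-1)]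

lemma tsum_rpow_tail_le {δ : ℝ} (hδ : 0 < δ) {N : ℝ} (hN : 2 ≤ N) :
    ∑' j : ℕ, ENNReal.ofReal ((N + j) ^ (-(1+δ))) ≤ ENNReal.ofReal ((N-1) ^ (-δ) / δ) := by
  rw [ENNReal.tsum_eq_iSup_sum]
  refine iSup_le fun u => ?_
  obtain ⟨M, hM⟩ : ∃ M : ℕ, ∀ j ∈ u, j < M := ⟨(u.sup id) + 1, fun j hj =>
    Nat.lt_succ_of_le (Finset.le_sup (f := id) hj)⟩
  calc ∑ j ∈ u, ENNReal.ofReal ((N + j) ^ (-(1+δ)))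
      ≤ ∑ j ∈ Finset.range M, ENNReal.ofReal ((N + j) ^ (-(1+δ))) := by
        apply Finset.sum_le_sum_of_subset
        intro j hj
        exact Finset.mem_range.2 (hM j hj)
    _ ≤ ENNReal.ofReal ((N-1) ^ (-δ) / δ) := by
        rw [← ENNReal.ofReal_sum_of_nonneg (fun j _ => Real.rpow_nonneg (by positivity) _)]
        apply ENNReal.ofReal_le_ofReal
        have hstep : ∀ j : ℕ, (N + j) ^ (-(1+δ)) ≤
            ((N - 1 + j) ^ (-δ) - (N - 1 + (j+1):ℝ) ^ (-δ)) / δ := by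
          intro j
          have hk : (1:ℝ) ≤ N - 1 + j := by
            have : (0:ℝ) ≤ j := Nat.cast_nonneg j
            linarith
          have := rpow_step hδ hk
          have heq : N - 1 + j + 1 = N + j := by ring
          rw [heq] at this
          have heq2 : N - 1 + ((j:ℝ)+1) = N + j := by ring
          rw [heq2, le_div_iff₀ hδ]
          linarith
        calc ∑ j ∈ Finset.range M, (N + j) ^ (-(1+δ))
            ≤ ∑ j ∈ Finset.range M, ((N - 1 + j) ^ (-δ) - (N - 1 + (j+1):ℝ) ^ (-δ)) / δ :=
              Finset.sum_le_sum fun j _ => hstep j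
          _ = (∑ j ∈ Finset.range M, ((fun j : ℕ => (N - 1 + j) ^ (-δ)) j
                - (fun j : ℕ => (N - 1 + j) ^ (-δ)) (j+1))) / δ := by
              rw [← Finset.sum_div]
              congr 1
              apply Finset.sum_congr rfl
              intro j _
              push_cast
              ring_nf
          _ = ((N - 1 + (0:ℕ)) ^ (-δ) - (N - 1 + M) ^ (-δ)) / δ := by
              rw [Finset.sum_range_sub' (fun j : ℕ => (N - 1 + j) ^ (-δ)) M]
          _ ≤ (N-1) ^ (-δ) / δ := by
              have h1 : (0:ℝ) ≤ (N - 1 + M) ^ (-δ) := Real.rpow_nonneg (by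
                have : (0:ℝ) ≤ M := Nat.cast_nonneg M
                linarith) _
              have h2 : N - 1 + ((0:ℕ):ℝ) = N - 1 := by push_cast; ring
              rw [h2]
              gcongr
              linarith


lemma natside_le {δ K : ℝ} (hδ : 0 < δ) (hK : 1 ≤ K) :
    ∑' n : ℕ, ENNReal.ofReal ((max ((n:ℝ) - 1) K) ^ (-(1+δ))) ≤
      ENNReal.ofReal ((4 + 1/δ) * K ^ (-δ)) := by
  have hK0 : (0:ℝ) < K := lt_of_lt_of_le one_pos hK
  set N₀ : ℕ := ⌈K⌉₊ + 1 with hN₀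
  have hceil : K ≤ (⌈K⌉₊ : ℝ) := Nat.le_ceil K
  have hceil2 : (⌈K⌉₊ : ℝ) < K + 1 := Nat.ceil_lt_add_one hK0.le
  have hN₀K : K ≤ (N₀ : ℝ) - 1 := by rw [hN₀]; push_cast; linarith
  have hN₀2 : (2:ℝ) ≤ (N₀:ℝ) := by
    have : (1:ℝ) ≤ (⌈K⌉₊ : ℝ) := le_trans hK hceil
    push_cast; linarith
  set g : ℕ → ℝ≥0∞ := fun n => if n ≤ N₀ then ENNReal.ofReal (K ^ (-(1+δ))) else 0
  set w : ℕ → ℝ≥0∞ := fun n =>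
    if N₀ + 1 ≤ n then ENNReal.ofReal (((n:ℝ) - 1) ^ (-(1+δ))) else 0
  have hterm : ∀ n : ℕ, ENNReal.ofReal ((max ((n:ℝ) - 1) K) ^ (-(1+δ))) ≤ g n + w n := by
    intro n
    rcases le_or_gt n N₀ with hn | hn
    · have h1 : ENNReal.ofReal ((max ((n:ℝ) - 1) K) ^ (-(1+δ))) ≤ g n := by
        simp only [g, if_pos hn]
        apply ENNReal.ofReal_le_ofReal
        exact rpow_anti_base hK0 (le_max_right _ _) (by linarith)
      exact le_trans h1 le_self_add
    · have hn' : N₀ + 1 ≤ n := hn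
      have hmx : max ((n:ℝ) - 1) K = (n:ℝ) - 1 := by
        apply max_eq_left
        have : ((N₀:ℝ) + 1) ≤ (n:ℝ) := by exact_mod_cast hn'
        linarith
      have h1 : ENNReal.ofReal ((max ((n:ℝ) - 1) K) ^ (-(1+δ))) = w n := by
        simp only [w, if_pos hn', hmx]
      rw [h1]
      exact le_add_self
  calc ∑' n : ℕ, ENNReal.ofReal ((max ((n:ℝ) - 1) K) ^ (-(1+δ)))
      ≤ ∑' n, (g n + w n) := ENNReal.tsum_le_tsum hterm
    _ = (∑' n, g n) + ∑' n, w n := ENNReal.tsum_add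
    _ ≤ ENNReal.ofReal ((4:ℝ) * K ^ (-δ)) + ENNReal.ofReal ((1/δ) * K ^ (-δ)) := by
        gcongr
        · -- g sum
          have hg : ∑' n, g n = ∑ n ∈ Finset.range (N₀ + 1), g n := by
            apply tsum_eq_sum
            intro n hn
            have : ¬ n ≤ N₀ := by
              intro hle
              exact hn (Finset.mem_range.2 (Nat.lt_succ_of_le hle))
            simp [g, this]
          rw [hg]
          have hgsum : ∑ n ∈ Finset.range (N₀ + 1), g n =
              ((N₀ + 1 : ℕ) : ℝ≥0∞) * ENNReal.ofReal (K ^ (-(1+δ))) := by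
            have hcon : ∀ n ∈ Finset.range (N₀+1), g n = ENNReal.ofReal (K ^ (-(1+δ))) := by
              intro n hn
              have h : n ≤ N₀ := Nat.lt_succ_iff.1 (Finset.mem_range.1 hn)
              simp [g, h]
            rw [Finset.sum_congr rfl hcon, Finset.sum_const, Finset.card_range, nsmul_eq_mul]
          rw [hgsum]
          have hcast : ((N₀ + 1 : ℕ) : ℝ≥0∞) = ENNReal.ofReal ((N₀ + 1 : ℕ) : ℝ) := by
            rw [ENNReal.ofReal_natCast]
          rw [hcast, ← ENNReal.ofReal_mul (by positivity)]
          apply ENNReal.ofReal_le_ofReal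
          have h41 : ((N₀ + 1 : ℕ) : ℝ) ≤ 4 * K := by rw [hN₀]; push_cast; linarith
          calc ((N₀ + 1 : ℕ) : ℝ) * K ^ (-(1+δ)) ≤ (4 * K) * K ^ (-(1+δ)) := by
                apply mul_le_mul_of_nonneg_right h41 (Real.rpow_nonneg hK0.le _)
            _ = 4 * K ^ (-δ) := by
                rw [mul_assoc]
                congr 1
                calc K * K ^ (-(1+δ)) = K ^ (1:ℝ) * K ^ (-(1+δ)) := by rw [Real.rpow_one]
                  _ = K ^ (1 + -(1+δ)) := (Real.rpow_add hK0 _ _).symm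
                  _ = K ^ (-δ) := by norm_num
        · -- w sum
          have hi : Function.Injective (fun j : ℕ => j + (N₀ + 1)) :=
            fun j k h => by simpa using h
          have hw : ∑' j : ℕ, w (j + (N₀ + 1)) = ∑' n, w n := by
            apply hi.tsum_eq
            intro n hn
            rcases le_or_gt (N₀ + 1) n with h | h
            · exact ⟨n - (N₀+1), by show n - (N₀+1) + (N₀+1) = n; omega⟩
            · have hz : w n = 0 := if_neg (by omega)
              exact absurd hz hn
          rw [← hw]
          have hw2 : ∀ j : ℕ, w (j + (N₀ + 1)) =
              ENNReal.ofReal (((N₀:ℝ) + j) ^ (-(1+δ))) := by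
            intro j
            have hle : N₀ + 1 ≤ j + (N₀ + 1) := by omega
            have hc : ((j + (N₀ + 1) : ℕ) : ℝ) - 1 = (N₀:ℝ) + j := by push_cast; ring
            simp only [w, if_pos hle, hc]
          calc ∑' j : ℕ, w (j + (N₀ + 1))
              = ∑' j : ℕ, ENNReal.ofReal (((N₀:ℝ) + j) ^ (-(1+δ))) := by
                exact tsum_congr hw2
            _ ≤ ENNReal.ofReal (((N₀:ℝ) - 1) ^ (-δ) / δ) := tsum_rpow_tail_le hδ hN₀2
            _ ≤ ENNReal.ofReal ((1/δ) * K ^ (-δ)) := by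
                apply ENNReal.ofReal_le_ofReal
                have h6 : ((N₀:ℝ)-1) ^ (-δ) ≤ K ^ (-δ) := rpow_anti_base hK0 hN₀K hδ.le
                calc ((N₀:ℝ)-1) ^ (-δ) / δ ≤ K ^ (-δ) / δ := by gcongr
                  _ = (1/δ) * K ^ (-δ) := by ring
    _ = ENNReal.ofReal ((4 + 1/δ) * K ^ (-δ)) := by
        rw [← ENNReal.ofReal_add (by positivity) (by positivity)]
        congr 1
        ring

lemma zside_le {δ K : ℝ} (hδ : 0 < δ) (hK : 1 ≤ K) :
    ∑' n : ℤ, ENNReal.ofReal ((max ((n.natAbs : ℝ) - 1) K) ^ (-(1+δ))) ≤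
      ENNReal.ofReal ((8 + 2/δ) * K ^ (-δ)) := by
  have hK0 : (0:ℝ) < K := lt_of_lt_of_le one_pos hK
  rw [tsum_of_nat_of_neg_add_one ENNReal.summable ENNReal.summable]
  have hnat := natside_le hδ hK
  have e1 : ∀ n : ℕ, ENNReal.ofReal ((max ((((n:ℤ)).natAbs : ℝ) - 1) K) ^ (-(1+δ))) =
      ENNReal.ofReal ((max ((n:ℝ) - 1) K) ^ (-(1+δ))) := by
    intro n; norm_num
  have e2 : ∀ n : ℕ, ENNReal.ofReal ((max (((-((n:ℤ)+1)).natAbs : ℝ) - 1) K) ^ (-(1+δ))) ≤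
      ENNReal.ofReal ((max ((n:ℝ) - 1) K) ^ (-(1+δ))) := by
    intro n
    have hval : (((-((n:ℤ)+1)).natAbs : ℝ)) = (n:ℝ) + 1 := by
      rw [Int.natAbs_neg]
      have h3 : ((n:ℤ)+1) = ((n+1 : ℕ) : ℤ) := by push_cast; ring
      rw [h3, Int.natAbs_natCast]
      push_cast; ring
    rw [hval]
    apply ENNReal.ofReal_le_ofReal
    apply rpow_anti_base (lt_of_lt_of_le hK0 (le_max_right _ _))
      (max_le_max (by linarith) le_rfl) (by linarith)
  calc (∑' n : ℕ, ENNReal.ofReal ((max ((((n:ℤ)).natAbs : ℝ) - 1) K) ^ (-(1+δ)))) +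
        ∑' n : ℕ, ENNReal.ofReal ((max (((-((n:ℤ)+1)).natAbs : ℝ) - 1) K) ^ (-(1+δ)))
      ≤ ENNReal.ofReal ((4 + 1/δ) * K ^ (-δ)) + ENNReal.ofReal ((4 + 1/δ) * K ^ (-δ)) := by
        apply add_le_add
        · rw [tsum_congr e1]; exact hnat
        · exact le_trans (ENNReal.tsum_le_tsum e2) hnat
    _ = ENNReal.ofReal ((8 + 2/δ) * K ^ (-δ)) := by
        rw [← ENNReal.ofReal_add (by positivity) (by positivity)]
        congr 1
        ring

lemma tsum_pi_prod (g : ℤ → ℝ≥0∞) :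
    ∀ n : ℕ, ∑' r : Fin n → ℤ, ∏ i, g (r i) = (∑' m : ℤ, g m) ^ n := by
  intro n
  induction n with
  | zero =>
    rw [pow_zero]
    have h0 : ∀ r : Fin 0 → ℤ, ∏ i, g (r i) = 1 := fun r => Finset.prod_of_isEmpty _
    rw [tsum_congr h0]
    exact tsum_eq_single (default : Fin 0 → ℤ)
      (fun b hb => absurd (Subsingleton.elim b default) hb)
  | succ n ih =>
    set e : (ℤ × (Fin n → ℤ)) ≃ (Fin (n+1) → ℤ) := Fin.consEquiv (fun _ : Fin (n+1) => ℤ)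
      with he
    rw [← e.tsum_eq (fun r => ∏ i, g (r i))]
    have hterm : ∀ p : ℤ × (Fin n → ℤ),
        (∏ i, g ((e p) i)) = g p.1 * ∏ i : Fin n, g (p.2 i) := by
      rintro ⟨m, r'⟩
      rw [Fin.prod_univ_succ]
      simp [he, Fin.consEquiv, Fin.cons_zero, Fin.cons_succ]
    calc ∑' p : ℤ × (Fin n → ℤ), ∏ i, g ((e p) i)
        = ∑' p : ℤ × (Fin n → ℤ), g p.1 * ∏ i : Fin n, g (p.2 i) := tsum_congr hterm
      _ = ∑' m : ℤ, ∑' r' : Fin n → ℤ, g m * ∏ i : Fin n, g (r' i) := ENNReal.tsum_prod'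
      _ = ∑' m : ℤ, g m * ∑' r' : Fin n → ℤ, ∏ i : Fin n, g (r' i) := by
          exact tsum_congr fun m => ENNReal.tsum_mul_left
      _ = (∑' m : ℤ, g m) * ((∑' m : ℤ, g m) ^ n) := by
          rw [tsum_congr (fun m => by rw [ih]), ENNReal.tsum_mul_right]
      _ = (∑' m : ℤ, g m) ^ (n+1) := by rw [pow_succ]; ring


lemma v0Val_le (hd : 1 ≤ d) {φ : ℝ → ℝ} {r₀ R φ₀ φ₁ ε₀ s : ℝ}
    (hA : AssumptionA d φ r₀ R φ₀ φ₁ ε₀ s) :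
    ∃ C : ℝ, 0 ≤ C ∧ ∀ a : ℝ, 0 < a → a ≤ R → v0Val d φ a ≤ C / a ^ d := by
  obtain ⟨M, hM0, hM⟩ := phiMinus_bdd hA
  have hR : 0 < R := lt_trans hA.r0_pos hA.R_gt
  have hd0 : (0:ℝ) < d := by exact_mod_cast hd
  have hε : 0 < ε₀ := hA.eps0_pos
  have hδ : 0 < ε₀ / d := div_pos hε hd0
  set δ : ℝ := ε₀ / d with hδdef
  have hq : (d:ℝ) * (1 + δ) = (d:ℝ) + ε₀ := by
    rw [hδdef]; field_simp
  set C₂ : ℝ := max φ₁ (M * R ^ ((d:ℝ) + ε₀)) with hC₂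
  have hC₂0 : 0 ≤ C₂ := le_trans hA.phi1_pos.le (le_max_left _ _)
  have hRd : (0:ℝ) < R ^ (-δ) := Real.rpow_pos_of_pos hR _
  set c₃ : ℝ := (8 + 2/δ) * R ^ (-δ) with hc₃
  have hc₃0 : 0 ≤ c₃ := by positivity
  refine ⟨C₂ * c₃ ^ d, by positivity, ?_⟩
  intro a ha haR
  set K : ℝ := R / a with hKdef
  have hK1 : 1 ≤ K := (one_le_div ha).2 haR
  have hK0 : 0 < K := lt_of_lt_of_le one_pos hK1
  have haK : a * K = R := by rw [hKdef]; field_simp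
  set m : ℤ → ℝ := fun n => max ((n.natAbs : ℝ) - 1) K with hm
  have hm_ge : ∀ n, K ≤ m n := fun n => le_max_right _ _
  have hm_pos : ∀ n, 0 < m n := fun n => lt_of_lt_of_le hK0 (hm_ge n)
  have ham_pos : ∀ n, 0 < a * m n := fun n => mul_pos ha (hm_pos n)
  have hde : (0:ℝ) ≤ (d:ℝ) + ε₀ := by positivity
  -- pointwise bound on the double sup
  have key : ∀ r : Fin d → ℤ,
      (⨆ x ∈ {x : Pt d | cubeIdx d a x = 0}, ⨆ y ∈ {y : Pt d | cubeIdx d a y = r},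
        ENNReal.ofReal (phiMinus φ (dist x y))) ≤
      ENNReal.ofReal (C₂ * ∏ i, (a * m (r i)) ^ (-(1+δ))) := by
    intro r
    refine iSup₂_le fun x hx => iSup₂_le fun y hy => ENNReal.ofReal_le_ofReal ?_
    have hx' : cubeIdx d a x = 0 := hx
    have hy' : cubeIdx d a y = r := hy
    haveI : Nonempty (Fin d) := ⟨⟨0, hd⟩⟩
    set nr : ℕ := Finset.univ.sup (fun i => (r i).natAbs) with hnr
    have hProd_pos : 0 < ∏ i, (a * m (r i)) :=
      Finset.prod_pos fun i _ => ham_pos (r i)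
    have hprod_eq : (∏ i, (a * m (r i))) ^ (-(1+δ)) = ∏ i, (a * m (r i)) ^ (-(1+δ)) :=
      (Real.finset_prod_rpow _ _ (fun i _ => (ham_pos (r i)).le) _).symm
    rcases le_or_gt K ((nr : ℝ) - 1) with hcase | hcase
    · -- far case
      obtain ⟨i₀, _, hi₀⟩ := Finset.exists_mem_eq_sup Finset.univ
        Finset.univ_nonempty (fun i => (r i).natAbs)
      have hdist : a * ((nr:ℝ) - 1) ≤ dist x y := by
        rw [hnr, hi₀]
        exact dist_ge_of_cubes ha hx' hy' i₀
      have hDm_pos : 0 < a * ((nr:ℝ) - 1) := mul_pos ha (lt_of_lt_of_le hK0 hcase)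
      have hdR : R ≤ dist x y := by
        rw [← haK]
        exact le_trans (by nlinarith) hdist
      have h1 : phiMinus φ (dist x y) ≤ φ₁ / (dist x y) ^ ((d:ℝ) + ε₀) :=
        phiMinus_le_decay hA hdR
      have h2 : φ₁ / (dist x y) ^ ((d:ℝ)+ε₀) ≤ φ₁ / (a * ((nr:ℝ)-1)) ^ ((d:ℝ)+ε₀) :=
        div_le_div_of_nonneg_left hA.phi1_pos.le
          (Real.rpow_pos_of_pos hDm_pos _)
          (Real.rpow_le_rpow hDm_pos.le hdist hde)
      have h3 : ∏ i, (a * m (r i)) ≤ (a * ((nr:ℝ)-1)) ^ d := by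
        calc ∏ i, (a * m (r i)) ≤ ∏ _i : Fin d, (a * ((nr:ℝ)-1)) := by
              apply Finset.prod_le_prod (fun i _ => (ham_pos (r i)).le)
              intro i _
              apply mul_le_mul_of_nonneg_left _ ha.le
              have h6 : ((r i).natAbs : ℝ) ≤ (nr : ℝ) := by
                exact_mod_cast Finset.le_sup (f := fun i => (r i).natAbs) (Finset.mem_univ i)
              exact max_le (by linarith) hcase
          _ = (a * ((nr:ℝ)-1)) ^ d := by
              rw [Finset.prod_const, Finset.card_univ, Fintype.card_fin]
      have h5 : (a*((nr:ℝ)-1)) ^ (-((d:ℝ)+ε₀)) = ((a*((nr:ℝ)-1)) ^ d) ^ (-(1+δ)) := by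
        rw [← Real.rpow_natCast (a*((nr:ℝ)-1)) d, ← Real.rpow_mul hDm_pos.le, mul_neg, hq]
      have h4 : (a * ((nr:ℝ)-1)) ^ (-((d:ℝ)+ε₀)) ≤ ∏ i, (a * m (r i)) ^ (-(1+δ)) := by
        rw [h5, ← hprod_eq]
        exact rpow_anti_base hProd_pos h3 (by linarith)
      calc phiMinus φ (dist x y) ≤ φ₁ / (a * ((nr:ℝ)-1)) ^ ((d:ℝ)+ε₀) := le_trans h1 h2
        _ = φ₁ * (a * ((nr:ℝ)-1)) ^ (-((d:ℝ)+ε₀)) := by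
            rw [Real.rpow_neg hDm_pos.le, div_eq_mul_inv]
        _ ≤ C₂ * ∏ i, (a * m (r i)) ^ (-(1+δ)) := by
            apply mul_le_mul (le_max_left _ _) h4 (Real.rpow_nonneg hDm_pos.le _) hC₂0
    · -- near case
      have hble : ∀ i, a * m (r i) ≤ R := by
        intro i
        have h6 : ((r i).natAbs : ℝ) ≤ (nr:ℝ) := by
          exact_mod_cast Finset.le_sup (f := fun i => (r i).natAbs) (Finset.mem_univ i)
        have h7 : m (r i) ≤ K := max_le (by linarith) le_rfl
        calc a * m (r i) ≤ a * K := mul_le_mul_of_nonneg_left h7 ha.le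
          _ = R := haK
      have h8 : ∏ i, (a * m (r i)) ≤ R ^ d := by
        calc ∏ i, (a * m (r i)) ≤ ∏ _i : Fin d, R :=
              Finset.prod_le_prod (fun i _ => (ham_pos (r i)).le) (fun i _ => hble i)
          _ = R ^ d := by rw [Finset.prod_const, Finset.card_univ, Fintype.card_fin]
      have h9 : R ^ (-((d:ℝ)+ε₀)) ≤ ∏ i, (a * m (r i)) ^ (-(1+δ)) := by
        have h10 : R ^ (-((d:ℝ)+ε₀)) = (R ^ d) ^ (-(1+δ)) := by
          rw [← Real.rpow_natCast R d, ← Real.rpow_mul hR.le, mul_neg, hq]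
        rw [h10, ← hprod_eq]
        exact rpow_anti_base hProd_pos h8 (by linarith)
      have h11 : phiMinus φ (dist x y) ≤ M := hM _ dist_nonneg
      have h12 : M ≤ (M * R ^ ((d:ℝ)+ε₀)) * R ^ (-((d:ℝ)+ε₀)) := by
        rw [mul_assoc, ← Real.rpow_add hR, add_neg_cancel, Real.rpow_zero, mul_one]
      calc phiMinus φ (dist x y) ≤ (M * R ^ ((d:ℝ)+ε₀)) * R ^ (-((d:ℝ)+ε₀)) :=
            le_trans h11 h12
        _ ≤ C₂ * ∏ i, (a * m (r i)) ^ (-(1+δ)) := by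
            apply mul_le_mul (le_max_right _ _) h9 (Real.rpow_nonneg hR.le _) hC₂0
  -- sum the bound
  have hsum : v0E d φ a ≤ ENNReal.ofReal C₂ *
      (∑' n : ℤ, ENNReal.ofReal ((a * m n) ^ (-(1+δ)))) ^ d := by
    calc v0E d φ a
        ≤ ∑' r : Fin d → ℤ, ENNReal.ofReal (C₂ * ∏ i, (a * m (r i)) ^ (-(1+δ))) :=
          ENNReal.tsum_le_tsum key
      _ = ∑' r : Fin d → ℤ, ENNReal.ofReal C₂ *
            ∏ i, ENNReal.ofReal ((a * m (r i)) ^ (-(1+δ))) := by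
          refine tsum_congr fun r => ?_
          rw [ENNReal.ofReal_mul hC₂0,
            ENNReal.ofReal_prod_of_nonneg (fun i _ => Real.rpow_nonneg (ham_pos (r i)).le _)]
      _ = ENNReal.ofReal C₂ *
            ∑' r : Fin d → ℤ, ∏ i, ENNReal.ofReal ((a * m (r i)) ^ (-(1+δ))) :=
          ENNReal.tsum_mul_left
      _ = ENNReal.ofReal C₂ * (∑' n : ℤ, ENNReal.ofReal ((a * m n) ^ (-(1+δ)))) ^ d := by
          rw [tsum_pi_prod (fun n => ENNReal.ofReal ((a * m n) ^ (-(1+δ)))) d]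
  have hinner : ∑' n : ℤ, ENNReal.ofReal ((a * m n) ^ (-(1+δ))) ≤ ENNReal.ofReal (c₃ / a) := by
    calc ∑' n : ℤ, ENNReal.ofReal ((a * m n) ^ (-(1+δ)))
        = ∑' n : ℤ, ENNReal.ofReal (a ^ (-(1+δ))) * ENNReal.ofReal ((m n) ^ (-(1+δ))) := by
          refine tsum_congr fun n => ?_
          rw [Real.mul_rpow ha.le (hm_pos n).le, ENNReal.ofReal_mul (Real.rpow_nonneg ha.le _)]
      _ = ENNReal.ofReal (a ^ (-(1+δ))) * ∑' n : ℤ, ENNReal.ofReal ((m n) ^ (-(1+δ))) :=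
          ENNReal.tsum_mul_left
      _ ≤ ENNReal.ofReal (a ^ (-(1+δ))) * ENNReal.ofReal ((8 + 2/δ) * K ^ (-δ)) := by
          gcongr
          exact zside_le hδ hK1
      _ = ENNReal.ofReal (c₃ / a) := by
          rw [← ENNReal.ofReal_mul (Real.rpow_nonneg ha.le _)]
          congr 1
          have hKr : K ^ (-δ) = R ^ (-δ) * a ^ δ := by
            rw [hKdef, Real.div_rpow hR.le ha.le, Real.rpow_neg ha.le, div_inv_eq_mul]
          have h13 : -(1+δ) + δ = -1 := by ring
          have h14 : a ^ (-(1+δ)) * a ^ δ = a⁻¹ := by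
            rw [← Real.rpow_add ha, h13, Real.rpow_neg_one]
          calc a ^ (-(1+δ)) * ((8 + 2/δ) * K ^ (-δ))
              = ((8 + 2/δ) * R ^ (-δ)) * (a ^ (-(1+δ)) * a ^ δ) := by rw [hKr]; ring
            _ = ((8 + 2/δ) * R ^ (-δ)) * a⁻¹ := by rw [h14]
            _ = c₃ / a := by rw [hc₃]; ring
  have hfin : v0E d φ a ≤ ENNReal.ofReal (C₂ * c₃ ^ d / a ^ d) := by
    refine le_trans hsum ?_
    calc ENNReal.ofReal C₂ * (∑' n : ℤ, ENNReal.ofReal ((a * m n) ^ (-(1+δ)))) ^ d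
        ≤ ENNReal.ofReal C₂ * (ENNReal.ofReal (c₃ / a)) ^ d := by
          gcongr
      _ = ENNReal.ofReal (C₂ * (c₃/a) ^ d) := by
          rw [← ENNReal.ofReal_pow (by positivity), ← ENNReal.ofReal_mul hC₂0]
      _ = ENNReal.ofReal (C₂ * c₃ ^ d / a ^ d) := by
          rw [div_pow, mul_div_assoc]
  rw [v0Val]
  exact ENNReal.toReal_le_of_le_ofReal (by positivity) hfin


lemma tendsto_rpow_nhdsWithin_zero {p : ℝ} (hp : 0 < p) :
    Filter.Tendsto (fun a : ℝ => a ^ p) (nhdsWithin 0 (Set.Ioi 0)) (nhds 0) := by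
  have h2 : Filter.Tendsto (fun a : ℝ => a ^ p) (nhds 0) (nhds ((0:ℝ) ^ p)) :=
    (Real.continuousAt_rpow_const 0 p (Or.inr hp.le)).tendsto
  rw [Real.zero_rpow hp.ne'] at h2
  exact h2.mono_left nhdsWithin_le_nhds

lemma tendsto_rpow_neg_nhdsWithin_zero {p : ℝ} (hp : 0 < p) :
    Filter.Tendsto (fun a : ℝ => a ^ (-p)) (nhdsWithin 0 (Set.Ioi 0)) Filter.atTop := by
  have h1 : Filter.Tendsto (fun a : ℝ => a ^ p) (nhdsWithin 0 (Set.Ioi 0))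
      (nhdsWithin 0 (Set.Ioi 0)) := by
    rw [tendsto_nhdsWithin_iff]
    refine ⟨tendsto_rpow_nhdsWithin_zero hp, ?_⟩
    filter_upwards [self_mem_nhdsWithin] with a ha
    exact Real.rpow_pos_of_pos ha p
  have h3 := tendsto_inv_nhdsGT_zero.comp h1
  apply h3.congr'
  filter_upwards [self_mem_nhdsWithin] with a ha
  simp only [Function.comp_apply]
  rw [← Real.rpow_neg (le_of_lt ha)]

lemma tendsto_pow_nat_nhdsWithin_zero (hd : 1 ≤ d) :
    Filter.Tendsto (fun a : ℝ => a ^ d) (nhdsWithin 0 (Set.Ioi 0)) (nhds 0) := by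
  have h1 := (continuous_pow d (M := ℝ)).tendsto (0:ℝ)
  rw [zero_pow (by omega : d ≠ 0)] at h1
  exact h1.mono_left nhdsWithin_le_nhds

end Eps1Aux




/-- asymptotics (3.10).  Under Assumption (A) with `s > d`, for fixed `z, β > 0`,
`lim_{a→0⁺} ε₁(a) = 0` and `lim_{a→0⁺} a^{-d}·log(1+ε₁(a)) = 0`. -/
theorem eps1_asymptotics (d : ℕ) (hd : 1 ≤ d) (φ : ℝ → ℝ)
    (r₀ R φ₀ φ₁ ε₀ s : ℝ) (hA : AssumptionA d φ r₀ R φ₀ φ₁ ε₀ s) (hs : (d : ℝ) < s)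
    (z β : ℝ) (hz : 0 < z) (hβ : 0 < β) :
    Tendsto (fun a : ℝ => eps1 d φ z β a) (𝓝[>] (0 : ℝ)) (𝓝 0) ∧
    Tendsto (fun a : ℝ => 1 / a ^ d * Real.log (1 + eps1 d φ z β a))
      (𝓝[>] (0 : ℝ)) (𝓝 0) := by
  obtain ⟨C, hC0, hC⟩ := v0Val_le hd hA
  have hR : 0 < R := lt_trans hA.r0_pos hA.R_gt
  have hd0 : (0:ℝ) < d := by exact_mod_cast hd
  have hsd : (0:ℝ) < Real.sqrt d := Real.sqrt_pos.2 hd0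
  have hs0 : (0:ℝ) < s := lt_trans hd0 hs
  set cB : ℝ := φ₀ / (Real.sqrt d) ^ s with hcB
  have hcB0 : 0 < cB := div_pos hA.phi0_pos (Real.rpow_pos_of_pos hsd s)
  set a₂ : ℝ := min (r₀ / Real.sqrt d) R with ha₂
  have ha₂0 : 0 < a₂ := lt_min (div_pos hA.r0_pos hsd) hR
  have hmem : Set.Ioc (0:ℝ) a₂ ∈ 𝓝[>] (0:ℝ) := Ioc_mem_nhdsGT_of_mem ⟨le_refl 0, ha₂0⟩
  -- the exponent lower bound tends to +∞
  have hGk : ∀ k : ℝ, 0 ≤ k →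
      Tendsto (fun a : ℝ => cB * a ^ (-s) - k * (C / a ^ d)) (𝓝[>] 0) atTop := by
    intro k hk
    have hrs := tendsto_rpow_neg_nhdsWithin_zero hs0
    have hsd2 : Tendsto (fun a : ℝ => cB - k * C * a ^ (s - (d:ℝ))) (𝓝[>] 0)
        (𝓝 (cB - k * C * 0)) :=
      tendsto_const_nhds.sub ((tendsto_rpow_nhdsWithin_zero (by linarith)).const_mul _)
    rw [mul_zero, sub_zero] at hsd2
    have h4 : Tendsto (fun a : ℝ => a ^ (-s) * (cB - k * C * a ^ (s - (d:ℝ)))) (𝓝[>] 0)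
        atTop := hrs.atTop_mul_pos hcB0 hsd2
    apply h4.congr'
    filter_upwards [self_mem_nhdsWithin] with a ha
    have ha' : (0:ℝ) < a := ha
    have h5 : a ^ (-s) * a ^ (s - (d:ℝ)) = (a ^ d)⁻¹ := by
      rw [← Real.rpow_add ha']
      have h6 : -s + (s - (d:ℝ)) = -(d:ℝ) := by ring
      rw [h6, Real.rpow_neg ha'.le, Real.rpow_natCast]
    calc a ^ (-s) * (cB - k * C * a ^ (s - (d:ℝ)))
        = cB * a ^ (-s) - k * C * (a ^ (-s) * a ^ (s - (d:ℝ))) := by ring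
      _ = cB * a ^ (-s) - k * (C / a ^ d) := by rw [h5]; ring
  -- exp of negative exponent tends to 0
  have hE : ∀ k : ℝ, 0 ≤ k →
      Tendsto (fun a => Real.exp (-β * (bVal d φ a - k * v0Val d φ a))) (𝓝[>] 0) (𝓝 0) := by
    intro k hk
    have h1 : Tendsto (fun a : ℝ => Real.exp (-(β * (cB * a ^ (-s) - k * (C / a ^ d)))))
        (𝓝[>] 0) (𝓝 0) :=
      Real.tendsto_exp_neg_atTop_nhds_zero.comp ((hGk k hk).const_mul_atTop hβ)
    apply tendsto_of_tendsto_of_tendsto_of_le_of_le' tendsto_const_nhds h1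
    · filter_upwards with a using (Real.exp_pos _).le
    · filter_upwards [hmem] with a ha
      have ha0 : 0 < a := ha.1
      apply Real.exp_le_exp.2
      have har : Real.sqrt d * a ≤ r₀ := by
        have h2 : a ≤ r₀ / Real.sqrt d := le_trans ha.2 (min_le_left _ _)
        rw [mul_comm]
        exact (le_div_iff₀ hsd).1 h2
      have heq : φ₀ / (Real.sqrt d * a) ^ s = cB * a ^ (-s) := by
        rw [Real.mul_rpow hsd.le ha0.le, div_mul_eq_div_div, Real.rpow_neg ha0.le,
          div_eq_mul_inv]
      have hb : cB * a ^ (-s) ≤ bVal d φ a := by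
        rw [← heq]; exact bVal_lower hd hA ha0 har
      have hv : v0Val d φ a ≤ C / a ^ d := hC a ha0 (le_trans ha.2 (min_le_right _ _))
      have h7 : cB * a ^ (-s) - k * (C / a ^ d) ≤ bVal d φ a - k * v0Val d φ a := by
        have := mul_le_mul_of_nonneg_left hv hk
        linarith
      have h8 := mul_le_mul_of_nonpos_left h7 (by linarith : -β ≤ 0)
      linarith [h8]
  -- a^d → 0
  have hpowd := tendsto_pow_nat_nhdsWithin_zero (d := d) hd
  -- a^d * E5 → 0
  have hP5 : Tendsto (fun a : ℝ => a ^ d *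
      Real.exp (-β * (bVal d φ a - 5 * v0Val d φ a))) (𝓝[>] 0) (𝓝 0) := by
    have := hpowd.mul (hE 5 (by norm_num))
    rw [mul_zero] at this
    exact this
  -- inner exp factor → 1
  have hI : Tendsto (fun a : ℝ => Real.exp (z * (a ^ d *
      Real.exp (-β * (bVal d φ a - 3 * v0Val d φ a))))) (𝓝[>] 0) (𝓝 1) := by
    have h1 : Tendsto (fun a : ℝ => a ^ d *
        Real.exp (-β * (bVal d φ a - 3 * v0Val d φ a))) (𝓝[>] 0) (𝓝 0) := by
      have := hpowd.mul (hE 3 (by norm_num))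
      rw [mul_zero] at this
      exact this
    have h2 := (h1.const_mul z)
    rw [mul_zero] at h2
    have h3 := (Real.continuous_exp.tendsto (0:ℝ)).comp h2
    rw [Real.exp_zero] at h3
    exact h3
  -- master limit
  have hmaster : Tendsto (fun a : ℝ => 1 / a ^ d * eps1 d φ z β a) (𝓝[>] 0) (𝓝 0) := by
    have hQ : Tendsto (fun a : ℝ => (1/2 * z^2) *
        ((a ^ d * Real.exp (-β * (bVal d φ a - 5 * v0Val d φ a))) *
          Real.exp (z * (a ^ d * Real.exp (-β * (bVal d φ a - 3 * v0Val d φ a))))))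
        (𝓝[>] 0) (𝓝 ((1/2 * z^2) * (0 * 1))) :=
      (hP5.mul hI).const_mul _
    rw [zero_mul, mul_zero] at hQ
    apply hQ.congr'
    filter_upwards [self_mem_nhdsWithin] with a ha
    have ha0 : (0:ℝ) < a := ha
    have had : a ^ d ≠ 0 := pow_ne_zero d ha0.ne'
    rw [eps1]
    have h2d : a ^ (2 * d) = a ^ d * a ^ d := by
      rw [two_mul, pow_add]
    rw [h2d]
    field_simp
  constructor
  · -- eps1 → 0
    have h1 : Tendsto (fun a : ℝ => a ^ d * (1 / a ^ d * eps1 d φ z β a)) (𝓝[>] 0) (𝓝 0) := by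
      have := hpowd.mul hmaster
      rw [mul_zero] at this
      exact this
    apply h1.congr'
    filter_upwards [self_mem_nhdsWithin] with a ha
    have ha0 : (0:ℝ) < a := ha
    have had : a ^ d ≠ 0 := pow_ne_zero d ha0.ne'
    field_simp
  · -- a^{-d} log(1+eps1) → 0
    apply tendsto_of_tendsto_of_tendsto_of_le_of_le' tendsto_const_nhds hmaster
    · filter_upwards [self_mem_nhdsWithin] with a ha
      have ha0 : (0:ℝ) < a := ha
      have he0 : 0 ≤ eps1 d φ z β a := by
        rw [eps1]
        have h1 : (0:ℝ) ≤ a ^ (2*d) := by positivity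
        positivity
      have hlog : 0 ≤ Real.log (1 + eps1 d φ z β a) := Real.log_nonneg (by linarith)
      positivity
    · filter_upwards [self_mem_nhdsWithin] with a ha
      have ha0 : (0:ℝ) < a := ha
      have he0 : 0 ≤ eps1 d φ z β a := by
        rw [eps1]
        have h1 : (0:ℝ) ≤ a ^ (2*d) := by positivity
        positivity
      have hlog : Real.log (1 + eps1 d φ z β a) ≤ eps1 d φ z β a := by
        have := Real.log_le_sub_one_of_pos (by linarith : (0:ℝ) < 1 + eps1 d φ z β a)
        linarith
      have hpos : (0:ℝ) ≤ 1 / a ^ d := by positivity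
      exact mul_le_mul_of_nonneg_left hlog hpos
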